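/- The G-orbits of x₁ := (0,E₁₂), x₂ := (0,I₂), x₃ := (E₁₁,E₁₂), x₄ := (E₁₂,E₂₂), x₅ := (E₁₂,I₂) have cardinalities (q+1)³(q−1), q(q²−1)², q(q²−1)², q(q²−1)², and q(q²−1)³ respectively, and the stabilizers in G of these five points have cardinalities q³(q−1)⁵, q²(q−1)³(q²−1), q²(q−1)³(q²−1), q²(q−1)³(q²−1), and q²(q−1)³ respectively (here Eᵢⱼ denotes the 2×2 matrix unit and I₂ the identity matrix). -/
import Mathlib


open Matrix

/-- `2 × 2` matrices over `F`. -/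
abbrev M2 (F : Type*) := Matrix (Fin 2) (Fin 2) F

/-- The right action of `G = GL₂(F) × GL₂(F) × GL₂(F)` on `V = M₂(F) × M₂(F)`. -/
noncomputable def act {F : Type*} [Field F] (v : M2 F × M2 F)
    (g : GL (Fin 2) F × GL (Fin 2) F × GL (Fin 2) F) : M2 F × M2 F :=
  ((((g.2.2 : M2 F) 0 0) • (((g.1⁻¹ : GL (Fin 2) F) : M2 F) * v.1 * (g.2.1 : M2 F)) +
      ((g.2.2 : M2 F) 1 0) • (((g.1⁻¹ : GL (Fin 2) F) : M2 F) * v.2 * (g.2.1 : M2 F))),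
   (((g.2.2 : M2 F) 0 1) • (((g.1⁻¹ : GL (Fin 2) F) : M2 F) * v.1 * (g.2.1 : M2 F)) +
      ((g.2.2 : M2 F) 1 1) • (((g.1⁻¹ : GL (Fin 2) F) : M2 F) * v.2 * (g.2.1 : M2 F))))

/-- The `G`-orbit of a point of `V`. -/
noncomputable def orbit {F : Type*} [Field F] (v : M2 F × M2 F) : Set (M2 F × M2 F) :=
  {w | ∃ g : GL (Fin 2) F × GL (Fin 2) F × GL (Fin 2) F, act v g = w}

/-- The stabilizer of a point of `V` in `G`. -/
noncomputable def stab {F : Type*} [Field F] (v : M2 F × M2 F) :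
    Set (GL (Fin 2) F × GL (Fin 2) F × GL (Fin 2) F) :=
  {g | act v g = v}

section Aux

set_option linter.unreachableTactic false
set_option linter.unusedTactic false
set_option linter.unusedSectionVars false

variable {F : Type*} [Field F]

lemma act_one (v : M2 F × M2 F) : act v 1 = v := by
  simp [act, Matrix.one_apply]

lemma act_mul (v : M2 F × M2 F) (g h : GL (Fin 2) F × GL (Fin 2) F × GL (Fin 2) F) :
    act v (g * h) = act (act v g) h := by
  refine Prod.ext ?_ ?_ <;>
  · ext i j
    simp [act, Prod.mul_def, _root_.mul_inv_rev, Matrix.mul_apply, Matrix.add_apply,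
      Matrix.smul_apply, Fin.sum_univ_two]
    ring

lemma stab_iff (v : M2 F × M2 F) (g : GL (Fin 2) F × GL (Fin 2) F × GL (Fin 2) F) :
    g ∈ stab v ↔
      ((g.2.2 : M2 F) 0 0 • (v.1 * (g.2.1 : M2 F)) +
          (g.2.2 : M2 F) 1 0 • (v.2 * (g.2.1 : M2 F)) = (g.1 : M2 F) * v.1 ∧
        (g.2.2 : M2 F) 0 1 • (v.1 * (g.2.1 : M2 F)) +
          (g.2.2 : M2 F) 1 1 • (v.2 * (g.2.1 : M2 F)) = (g.1 : M2 F) * v.2) := by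
  have hcancel : ∀ Z W : M2 F,
      ((g.1⁻¹ : GL (Fin 2) F) : M2 F) * Z = W ↔ Z = (g.1 : M2 F) * W := by
    intro Z W
    constructor
    · rintro rfl; rw [← mul_assoc, g.1.mul_inv, one_mul]
    · rintro rfl; rw [← mul_assoc, g.1.inv_mul, one_mul]
  have e : ∀ (a c : F),
      a • (((g.1⁻¹ : GL (Fin 2) F) : M2 F) * v.1 * (g.2.1 : M2 F)) +
        c • (((g.1⁻¹ : GL (Fin 2) F) : M2 F) * v.2 * (g.2.1 : M2 F)) =
      ((g.1⁻¹ : GL (Fin 2) F) : M2 F) *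
        (a • (v.1 * (g.2.1 : M2 F)) + c • (v.2 * (g.2.1 : M2 F))) := by
    intro a c
    rw [mul_add, mul_smul_comm, mul_smul_comm, mul_assoc, mul_assoc]
  show act v g = v ↔ _
  rw [act, Prod.ext_iff]
  simp only [e, hcancel]

noncomputable instance : MulAction (GL (Fin 2) F × GL (Fin 2) F × GL (Fin 2) F) (M2 F × M2 F) where
  smul g v := act v g⁻¹
  one_smul v := by show act v 1⁻¹ = v; rw [inv_one, act_one]
  mul_smul g h v := by
    show act v (g * h)⁻¹ = act (act v h⁻¹) g⁻¹
    rw [_root_.mul_inv_rev, act_mul]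

lemma act_inv_self_iff (v : M2 F × M2 F) (g : GL (Fin 2) F × GL (Fin 2) F × GL (Fin 2) F) :
    act v g⁻¹ = v ↔ act v g = v := by
  have key : ∀ h : GL (Fin 2) F × GL (Fin 2) F × GL (Fin 2) F, act v h = v → act v h⁻¹ = v := by
    intro h hh
    conv_lhs => rw [← hh]
    rw [← act_mul, mul_inv_cancel, act_one]
  constructor
  · intro h; have := key _ h; rwa [inv_inv] at this
  · exact key g

lemma orbit_eq (v : M2 F × M2 F) :
    orbit v = MulAction.orbit (GL (Fin 2) F × GL (Fin 2) F × GL (Fin 2) F) v := by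
  ext w
  simp only [orbit, Set.mem_setOf_eq, MulAction.mem_orbit_iff]
  constructor
  · rintro ⟨g, rfl⟩; exact ⟨g⁻¹, by show act v g⁻¹⁻¹ = _; rw [inv_inv]⟩
  · rintro ⟨g, rfl⟩; exact ⟨g⁻¹, rfl⟩

lemma stab_eq (v : M2 F × M2 F) :
    stab v = ↑(MulAction.stabilizer (GL (Fin 2) F × GL (Fin 2) F × GL (Fin 2) F) v) := by
  ext g
  simp only [stab, Set.mem_setOf_eq, SetLike.mem_coe, MulAction.mem_stabilizer_iff]
  exact ((act_inv_self_iff v g)).symm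

lemma orbit_mul_stab (v : M2 F × M2 F) :
    Nat.card (orbit v) * Nat.card (stab v) =
      Nat.card (GL (Fin 2) F × GL (Fin 2) F × GL (Fin 2) F) := by
  rw [orbit_eq, stab_eq, ← Nat.card_prod]
  exact Nat.card_congr (MulAction.orbitProdStabilizerEquivGroup _ v)

noncomputable def GLmk (A : M2 F) (hA : A.det ≠ 0) : GL (Fin 2) F :=
  Matrix.GeneralLinearGroup.mkOfDetNeZero A hA

@[simp] lemma GLmk_coe (A : M2 F) (hA : A.det ≠ 0) : ((GLmk A hA : GL (Fin 2) F) : M2 F) = A := rfl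

lemma detne (g : GL (Fin 2) F) : ((g : M2 F)).det ≠ 0 := by
  have := g.isUnit
  rw [Matrix.isUnit_iff_isUnit_det] at this
  exact this.ne_zero

lemma mat_entries {a b c d a' b' c' d' : F} (h : !![a, b; c, d] = !![a', b'; c', d']) :
    a = a' ∧ b = b' ∧ c = c' ∧ d = d' := by
  rw [← Matrix.ext_iff] at h
  simp only [Fin.forall_fin_two, Matrix.of_apply, Matrix.cons_val_zero, Matrix.cons_val_one,
    Matrix.head_cons, Matrix.head_fin_const, Matrix.cons_val', Matrix.empty_val',
    Matrix.cons_val_fin_one] at h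
  exact ⟨h.1.1, h.1.2, h.2.1, h.2.2⟩

/-! ### Case 1: `v = (0, E₁₂)` -/

noncomputable def f₁ (p : (Fˣ × Fˣ × F) × (Fˣ × Fˣ × F) × Fˣ × F) :
    GL (Fin 2) F × GL (Fin 2) F × GL (Fin 2) F :=
  (GLmk !![(p.1.1 : F) * (p.2.1.2.1 : F), p.1.2.2; 0, (p.1.2.1 : F)]
      (by simp [Matrix.det_fin_two_of, p.1.1.ne_zero, p.2.1.2.1.ne_zero, p.1.2.1.ne_zero]),
   GLmk !![(p.2.1.1 : F), p.2.1.2.2; 0, (p.2.1.2.1 : F)]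
      (by simp [Matrix.det_fin_two_of, p.2.1.1.ne_zero, p.2.1.2.1.ne_zero]),
   GLmk !![(p.2.2.1 : F), p.2.2.2; 0, (p.1.1 : F)]
      (by simp [Matrix.det_fin_two_of, p.2.2.1.ne_zero, p.1.1.ne_zero]))

lemma range_f₁ : Set.range (f₁ (F := F)) = stab ((0 : M2 F), !![0, 1; 0, 0]) := by
  ext g
  simp only [Set.mem_range]
  rw [stab_iff]
  constructor
  · rintro ⟨⟨⟨d, h11, h01⟩, ⟨k00, k11, k01⟩, a, b⟩, rfl⟩
    constructor <;>
    · ext i j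
      fin_cases i <;> fin_cases j <;>
        simp [f₁, Matrix.mul_apply, Fin.sum_univ_two] <;> ring
  · rintro ⟨e1, e2⟩
    rw [← Matrix.ext_iff] at e1 e2
    simp only [Fin.forall_fin_two] at e1 e2
    simp only [Fin.zero_eta, Fin.mk_one, Matrix.add_apply, Matrix.smul_apply, Matrix.mul_apply, Fin.sum_univ_two,
      Matrix.zero_apply, Matrix.of_apply, Matrix.cons_val_zero, Matrix.cons_val_one,
      Matrix.head_cons, Matrix.head_fin_const, Matrix.empty_val',
      Matrix.cons_val_fin_one, smul_eq_mul, mul_zero, zero_mul, add_zero, zero_add,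
      mul_one, one_mul, Matrix.cons_val'] at e1 e2
    obtain ⟨⟨e11, e12⟩, -, -⟩ := e1
    obtain ⟨⟨e21, e22⟩, -, e23⟩ := e2
    have dh := detne g.1
    have dk := detne g.2.1
    have dA := detne g.2.2
    rw [Matrix.det_fin_two] at dh dk dA
    rw [← e23, mul_zero, sub_zero] at dh
    have h00ne := left_ne_zero_of_mul dh
    have h11ne := right_ne_zero_of_mul dh
    have hAk : (g.2.2 : M2 F) 1 1 * (g.2.1 : M2 F) 1 1 ≠ 0 := by rw [e22]; exact h00ne
    have A11ne := left_ne_zero_of_mul hAk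
    have k11ne := right_ne_zero_of_mul hAk
    have hk10 : (g.2.1 : M2 F) 1 0 = 0 := by
      rcases mul_eq_zero.mp e21 with h | h
      · exact absurd h A11ne
      · exact h
    have hA10 : (g.2.2 : M2 F) 1 0 = 0 := by
      rcases mul_eq_zero.mp e12 with h | h
      · exact h
      · exact absurd h k11ne
    rw [hk10, mul_zero, sub_zero] at dk
    rw [hA10, mul_zero, sub_zero] at dA
    have k00ne := left_ne_zero_of_mul dk
    have A00ne := left_ne_zero_of_mul dA
    refine ⟨⟨⟨Units.mk0 _ A11ne, Units.mk0 _ h11ne, (g.1 : M2 F) 0 1⟩,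
      ⟨Units.mk0 _ k00ne, Units.mk0 _ k11ne, (g.2.1 : M2 F) 0 1⟩,
      Units.mk0 _ A00ne, (g.2.2 : M2 F) 0 1⟩, ?_⟩
    refine Prod.ext (Units.ext ?_) (Prod.ext (Units.ext ?_) (Units.ext ?_)) <;>
        refine Matrix.ext fun i j => ?_ <;>
      fin_cases i <;> fin_cases j <;>
        simp only [Fin.zero_eta, Fin.mk_one, f₁, GLmk_coe, Units.val_mk0, Matrix.of_apply, Matrix.cons_val_zero,
          Matrix.cons_val_one, Matrix.head_cons, Matrix.head_fin_const, Matrix.cons_val',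
          Matrix.empty_val', Matrix.cons_val_fin_one]
    · exact e22
    · exact e23
    · exact hk10.symm
    · exact hA10.symm

lemma f₁_inj : Function.Injective (f₁ (F := F)) := by
  rintro ⟨⟨d, h11, h01⟩, ⟨k00, k11, k01⟩, a, b⟩ ⟨⟨d', h11', h01'⟩, ⟨k00', k11', k01'⟩, a', b'⟩ h
  simp only [f₁, Prod.mk.injEq] at h
  obtain ⟨h1, h2, h3⟩ := h
  obtain ⟨m1, m2, -, m4⟩ := mat_entries (congrArg Units.val h1)
  obtain ⟨n1, n2, -, n4⟩ := mat_entries (congrArg Units.val h2)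
  obtain ⟨p1, p2, -, p4⟩ := mat_entries (congrArg Units.val h3)
  simp only [Prod.mk.injEq]
  exact ⟨⟨Units.ext p4, Units.ext m4, m2⟩, ⟨Units.ext n1, Units.ext n4, n2⟩, Units.ext p1, p2⟩

lemma card_stab₁ :
    Nat.card (stab ((0 : M2 F), !![0, 1; 0, 0])) =
      Nat.card ((Fˣ × Fˣ × F) × (Fˣ × Fˣ × F) × Fˣ × F) := by
  rw [← range_f₁]
  exact (Nat.card_congr (Equiv.ofInjective _ f₁_inj)).symm

/-! ### Case 2: `v = (0, 1)` -/

noncomputable def f₂ (p : (Fˣ × Fˣ × F) × GL (Fin 2) F) :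
    GL (Fin 2) F × GL (Fin 2) F × GL (Fin 2) F :=
  (GLmk ((p.1.2.1 : F) • (p.2 : M2 F))
      (by rw [Matrix.det_smul]; exact mul_ne_zero (pow_ne_zero _ p.1.2.1.ne_zero) (detne _)),
   p.2,
   GLmk !![(p.1.1 : F), p.1.2.2; 0, (p.1.2.1 : F)]
      (by simp [Matrix.det_fin_two_of, p.1.1.ne_zero, p.1.2.1.ne_zero]))

lemma range_f₂ : Set.range (f₂ (F := F)) = stab ((0 : M2 F), (1 : M2 F)) := by
  have F10 : ((1 : Fin 2) = 0) = False := by simp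
  have F01 : ((0 : Fin 2) = 1) = False := by simp
  ext g
  simp only [Set.mem_range]
  rw [stab_iff]
  constructor
  · rintro ⟨⟨⟨a, d, b⟩, k⟩, rfl⟩
    constructor <;>
    · ext i j
      fin_cases i <;> fin_cases j <;>
        simp [f₂, Matrix.mul_apply, Fin.sum_univ_two, Matrix.one_apply] <;> ring
  · rintro ⟨e1, e2⟩
    rw [← Matrix.ext_iff] at e1 e2
    simp only [Fin.forall_fin_two] at e1 e2
    simp only [Fin.zero_eta, Fin.mk_one, Matrix.add_apply, Matrix.smul_apply, Matrix.mul_apply, Fin.sum_univ_two,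
      Matrix.zero_apply, Matrix.one_apply, Matrix.of_apply, Matrix.cons_val_zero,
      Matrix.cons_val_one, Matrix.head_cons, Matrix.head_fin_const, Matrix.empty_val',
      Matrix.cons_val_fin_one, Matrix.cons_val', smul_eq_mul, mul_zero, zero_mul, add_zero,
      zero_add, mul_one, one_mul, F10, F01, if_true, if_false] at e1 e2
    obtain ⟨⟨a1, a2⟩, a3, a4⟩ := e1
    obtain ⟨⟨b1, b2⟩, b3, b4⟩ := e2
    have dk := detne g.2.1
    have dA := detne g.2.2
    rw [Matrix.det_fin_two] at dk dA
    have hA10 : (g.2.2 : M2 F) 1 0 = 0 := by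
      by_contra hA
      apply dk
      rw [(mul_eq_zero.mp a1).resolve_left hA, (mul_eq_zero.mp a2).resolve_left hA,
        (mul_eq_zero.mp a3).resolve_left hA, (mul_eq_zero.mp a4).resolve_left hA]
      ring
    rw [hA10, mul_zero, sub_zero] at dA
    have A00ne := left_ne_zero_of_mul dA
    have A11ne := right_ne_zero_of_mul dA
    refine ⟨⟨⟨Units.mk0 _ A00ne, Units.mk0 _ A11ne, (g.2.2 : M2 F) 0 1⟩, g.2.1⟩, ?_⟩
    refine Prod.ext (Units.ext ?_) (Prod.ext rfl (Units.ext ?_))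
    · refine Matrix.ext fun i j => ?_
      fin_cases i <;> fin_cases j <;>
        simp only [Fin.zero_eta, Fin.mk_one, f₂, GLmk_coe, Units.val_mk0, Matrix.smul_apply, smul_eq_mul]
      · exact b1
      · exact b2
      · exact b3
      · exact b4
    · refine Matrix.ext fun i j => ?_
      fin_cases i <;> fin_cases j <;>
        simp only [Fin.zero_eta, Fin.mk_one, f₂, GLmk_coe, Units.val_mk0, Matrix.of_apply, Matrix.cons_val_zero,
          Matrix.cons_val_one, Matrix.head_cons, Matrix.head_fin_const, Matrix.cons_val',
          Matrix.empty_val', Matrix.cons_val_fin_one]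
      exact hA10.symm

lemma f₂_inj : Function.Injective (f₂ (F := F)) := by
  rintro ⟨⟨a, d, b⟩, k⟩ ⟨⟨a', d', b'⟩, k'⟩ h
  simp only [f₂, Prod.mk.injEq] at h
  obtain ⟨h1, h2, h3⟩ := h
  obtain ⟨p1, p2, -, p4⟩ := mat_entries (congrArg Units.val h3)
  simp only [Prod.mk.injEq]
  exact ⟨⟨Units.ext p1, Units.ext p4, p2⟩, h2⟩

lemma card_stab₂ :
    Nat.card (stab ((0 : M2 F), (1 : M2 F))) =
      Nat.card ((Fˣ × Fˣ × F) × GL (Fin 2) F) := by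
  rw [← range_f₂]
  exact (Nat.card_congr (Equiv.ofInjective _ f₂_inj)).symm

/-! ### Case 3: `v = (E₁₁, E₁₂)` -/

noncomputable def f₃ (p : (Fˣ × Fˣ × F) × GL (Fin 2) F) :
    GL (Fin 2) F × GL (Fin 2) F × GL (Fin 2) F :=
  (GLmk !![(p.1.1 : F) * ((p.2 : M2 F)).det, p.1.2.2; 0, (p.1.2.1 : F)]
      (by simp [Matrix.det_fin_two_of, p.1.1.ne_zero, p.1.2.1.ne_zero, detne p.2]),
   p.2,
   GLmk !![(p.1.1 : F) * (p.2 : M2 F) 1 1, -((p.1.1 : F) * (p.2 : M2 F) 1 0);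
           -((p.1.1 : F) * (p.2 : M2 F) 0 1), (p.1.1 : F) * (p.2 : M2 F) 0 0]
      (by have hd := detne p.2
          rw [Matrix.det_fin_two] at hd
          rw [Matrix.det_fin_two_of]
          intro hc
          exact mul_ne_zero (mul_ne_zero p.1.1.ne_zero p.1.1.ne_zero) hd
            (by linear_combination hc)))

lemma range_f₃ : Set.range (f₃ (F := F)) = stab ((!![1, 0; 0, 0] : M2 F), !![0, 1; 0, 0]) := by
  ext g
  simp only [Set.mem_range]
  rw [stab_iff]
  constructor
  · rintro ⟨⟨⟨t, h11, h01⟩, k⟩, rfl⟩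
    constructor <;>
    · ext i j
      fin_cases i <;> fin_cases j <;>
        simp only [Fin.zero_eta, Fin.mk_one, f₃, GLmk_coe, Units.val_mk0, Matrix.add_apply, Matrix.smul_apply,
          Matrix.mul_apply, Fin.sum_univ_two, Matrix.zero_apply, Matrix.of_apply,
          Matrix.cons_val_zero, Matrix.cons_val_one, Matrix.head_cons, Matrix.head_fin_const,
          Matrix.empty_val', Matrix.cons_val_fin_one, Matrix.cons_val', smul_eq_mul, mul_zero,
          zero_mul, add_zero, zero_add, mul_one, one_mul, Matrix.det_fin_two] <;> ring
  · rintro ⟨e1, e2⟩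
    rw [← Matrix.ext_iff] at e1 e2
    simp only [Fin.forall_fin_two] at e1 e2
    simp only [Fin.zero_eta, Fin.mk_one, Matrix.add_apply, Matrix.smul_apply, Matrix.mul_apply, Fin.sum_univ_two,
      Matrix.zero_apply, Matrix.one_apply, Matrix.of_apply, Matrix.cons_val_zero,
      Matrix.cons_val_one, Matrix.head_cons, Matrix.head_fin_const, Matrix.empty_val',
      Matrix.cons_val_fin_one, Matrix.cons_val', smul_eq_mul, mul_zero, zero_mul, add_zero,
      zero_add, mul_one, one_mul, if_true, if_false] at e1 e2
    obtain ⟨⟨a1, a2⟩, a3, -⟩ := e1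
    obtain ⟨⟨b1, b2⟩, -, -⟩ := e2
    have dh := detne g.1
    have dk0 := detne g.2.1
    have dk := dk0
    rw [Matrix.det_fin_two] at dh dk
    rw [← a3, mul_zero, sub_zero] at dh
    have h00ne := left_ne_zero_of_mul dh
    have h11ne := right_ne_zero_of_mul dh
    have tne : (g.1 : M2 F) 0 0 * ((g.2.1 : M2 F)).det⁻¹ ≠ 0 :=
      mul_ne_zero h00ne (inv_ne_zero dk0)
    refine ⟨⟨⟨Units.mk0 _ tne, Units.mk0 _ h11ne, (g.1 : M2 F) 0 1⟩, g.2.1⟩, ?_⟩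
    refine Prod.ext (Units.ext ?_) (Prod.ext rfl (Units.ext ?_))
    · refine Matrix.ext fun i j => ?_
      fin_cases i <;> fin_cases j <;>
        simp only [Fin.zero_eta, Fin.mk_one, f₃, GLmk_coe, Units.val_mk0, Matrix.of_apply, Matrix.cons_val_zero,
          Matrix.cons_val_one, Matrix.head_cons, Matrix.head_fin_const, Matrix.cons_val',
          Matrix.empty_val', Matrix.cons_val_fin_one]
      · field_simp
      · exact a3
    · refine Matrix.ext fun i j => ?_
      fin_cases i <;> fin_cases j <;>
        simp only [Fin.zero_eta, Fin.mk_one, f₃, GLmk_coe, Units.val_mk0, Matrix.of_apply, Matrix.cons_val_zero,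
          Matrix.cons_val_one, Matrix.head_cons, Matrix.head_fin_const, Matrix.cons_val',
          Matrix.empty_val', Matrix.cons_val_fin_one]
      · field_simp
        rw [Matrix.det_fin_two]
        linear_combination ((g.2.1 : M2 F) 1 0) * a2 - ((g.2.1 : M2 F) 1 1) * a1
      · field_simp
        rw [Matrix.det_fin_two]
        linear_combination ((g.2.1 : M2 F) 1 0) * b2 - ((g.2.1 : M2 F) 1 1) * b1
      · field_simp
        rw [Matrix.det_fin_two]
        linear_combination ((g.2.1 : M2 F) 0 1) * a1 - ((g.2.1 : M2 F) 0 0) * a2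
      · field_simp
        rw [Matrix.det_fin_two]
        linear_combination ((g.2.1 : M2 F) 0 1) * b1 - ((g.2.1 : M2 F) 0 0) * b2

lemma f₃_inj : Function.Injective (f₃ (F := F)) := by
  rintro ⟨⟨t, h11, h01⟩, k⟩ ⟨⟨t', h11', h01'⟩, k'⟩ h
  simp only [f₃, Prod.mk.injEq] at h
  obtain ⟨h1, h2, h3⟩ := h
  subst h2
  obtain ⟨m1, m2, -, m4⟩ := mat_entries (congrArg Units.val h1)
  simp only [Prod.mk.injEq]
  exact ⟨⟨Units.ext (mul_right_cancel₀ (detne k) m1), Units.ext m4, m2⟩, trivial⟩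

lemma card_stab₃ :
    Nat.card (stab ((!![1, 0; 0, 0] : M2 F), !![0, 1; 0, 0])) =
      Nat.card ((Fˣ × Fˣ × F) × GL (Fin 2) F) := by
  rw [← range_f₃]
  exact (Nat.card_congr (Equiv.ofInjective _ f₃_inj)).symm

/-! ### Case 4: `v = (E₁₂, E₂₂)` -/

noncomputable def f₄ (p : GL (Fin 2) F × (Fˣ × Fˣ × F)) :
    GL (Fin 2) F × GL (Fin 2) F × GL (Fin 2) F :=
  (GLmk ((p.2.2.1 : F) • (p.1 : M2 F))
      (by rw [Matrix.det_smul]; exact mul_ne_zero (pow_ne_zero _ p.2.2.1.ne_zero) (detne _)),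
   GLmk !![(p.2.1 : F), p.2.2.2; 0, (p.2.2.1 : F)]
      (by simp [Matrix.det_fin_two_of, p.2.1.ne_zero, p.2.2.1.ne_zero]),
   p.1)

lemma range_f₄ : Set.range (f₄ (F := F)) = stab ((!![0, 1; 0, 0] : M2 F), !![0, 0; 0, 1]) := by
  ext g
  simp only [Set.mem_range]
  rw [stab_iff]
  constructor
  · rintro ⟨⟨A, ⟨k00, k11, k01⟩⟩, rfl⟩
    constructor <;>
    · ext i j
      fin_cases i <;> fin_cases j <;>
        simp [f₄, Matrix.mul_apply, Fin.sum_univ_two] <;> ring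
  · rintro ⟨e1, e2⟩
    rw [← Matrix.ext_iff] at e1 e2
    simp only [Fin.forall_fin_two] at e1 e2
    simp only [Fin.zero_eta, Fin.mk_one, Matrix.add_apply, Matrix.smul_apply, Matrix.mul_apply, Fin.sum_univ_two,
      Matrix.zero_apply, Matrix.one_apply, Matrix.of_apply, Matrix.cons_val_zero,
      Matrix.cons_val_one, Matrix.head_cons, Matrix.head_fin_const, Matrix.empty_val',
      Matrix.cons_val_fin_one, Matrix.cons_val', smul_eq_mul, mul_zero, zero_mul, add_zero,
      zero_add, mul_one, one_mul, if_true, if_false] at e1 e2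
    obtain ⟨⟨a1, a2⟩, a3, a4⟩ := e1
    obtain ⟨⟨b1, b2⟩, b3, b4⟩ := e2
    have dk := detne g.2.1
    have dA := detne g.2.2
    rw [Matrix.det_fin_two] at dk dA
    have hk10 : (g.2.1 : M2 F) 1 0 = 0 := by
      by_contra hk
      apply dA
      rw [(mul_eq_zero.mp a1).resolve_right hk, (mul_eq_zero.mp b1).resolve_right hk,
        (mul_eq_zero.mp a3).resolve_right hk, (mul_eq_zero.mp b3).resolve_right hk]
      ring
    rw [hk10, mul_zero, sub_zero] at dk
    have k00ne := left_ne_zero_of_mul dk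
    have k11ne := right_ne_zero_of_mul dk
    refine ⟨⟨g.2.2, ⟨Units.mk0 _ k00ne, Units.mk0 _ k11ne, (g.2.1 : M2 F) 0 1⟩⟩, ?_⟩
    refine Prod.ext (Units.ext ?_) (Prod.ext (Units.ext ?_) rfl)
    · refine Matrix.ext fun i j => ?_
      fin_cases i <;> fin_cases j <;>
        simp only [Fin.zero_eta, Fin.mk_one, f₄, GLmk_coe, Units.val_mk0, Matrix.smul_apply, smul_eq_mul]
      · linear_combination a2
      · linear_combination b2
      · linear_combination a4
      · linear_combination b4
    · refine Matrix.ext fun i j => ?_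
      fin_cases i <;> fin_cases j <;>
        simp only [Fin.zero_eta, Fin.mk_one, f₄, GLmk_coe, Units.val_mk0, Matrix.of_apply, Matrix.cons_val_zero,
          Matrix.cons_val_one, Matrix.head_cons, Matrix.head_fin_const, Matrix.cons_val',
          Matrix.empty_val', Matrix.cons_val_fin_one]
      exact hk10.symm

lemma f₄_inj : Function.Injective (f₄ (F := F)) := by
  rintro ⟨A, ⟨k00, k11, k01⟩⟩ ⟨A', ⟨k00', k11', k01'⟩⟩ h
  simp only [f₄, Prod.mk.injEq] at h
  obtain ⟨h1, h2, h3⟩ := h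
  obtain ⟨n1, n2, -, n4⟩ := mat_entries (congrArg Units.val h2)
  simp only [Prod.mk.injEq]
  exact ⟨h3, Units.ext n1, Units.ext n4, n2⟩

lemma card_stab₄ :
    Nat.card (stab ((!![0, 1; 0, 0] : M2 F), !![0, 0; 0, 1])) =
      Nat.card (GL (Fin 2) F × (Fˣ × Fˣ × F)) := by
  rw [← range_f₄]
  exact (Nat.card_congr (Equiv.ofInjective _ f₄_inj)).symm

/-! ### Case 5: `v = (E₁₂, 1)` -/

noncomputable def f₅ (p : (Fˣ × F) × (Fˣ × Fˣ × F)) :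
    GL (Fin 2) F × GL (Fin 2) F × GL (Fin 2) F :=
  (GLmk !![(p.1.1 : F) * (p.2.1 : F), p.1.2 * (p.2.2.1 : F) + (p.1.1 : F) * p.2.2.2;
           0, (p.1.1 : F) * (p.2.2.1 : F)]
      (by simp [Matrix.det_fin_two_of, p.1.1.ne_zero, p.2.1.ne_zero, p.2.2.1.ne_zero]),
   GLmk !![(p.2.1 : F), p.2.2.2; 0, (p.2.2.1 : F)]
      (by simp [Matrix.det_fin_two_of, p.2.1.ne_zero, p.2.2.1.ne_zero]),
   GLmk !![(p.1.1 : F) * (p.2.1 : F) * ((p.2.2.1 : F))⁻¹, p.1.2; 0, (p.1.1 : F)]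
      (by simp [Matrix.det_fin_two_of, p.1.1.ne_zero, p.2.1.ne_zero, p.2.2.1.ne_zero,
            inv_eq_zero]))

lemma range_f₅ : Set.range (f₅ (F := F)) = stab ((!![0, 1; 0, 0] : M2 F), (1 : M2 F)) := by
  have F10 : ((1 : Fin 2) = 0) = False := by simp
  have F01 : ((0 : Fin 2) = 1) = False := by simp
  ext g
  simp only [Set.mem_range]
  rw [stab_iff]
  constructor
  · rintro ⟨⟨⟨d, b⟩, ⟨k00, k11, k01⟩⟩, rfl⟩
    constructor <;>
    · ext i j
      fin_cases i <;> fin_cases j <;>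
        simp only [Fin.zero_eta, Fin.mk_one, f₅, GLmk_coe, Units.val_mk0, Matrix.add_apply, Matrix.smul_apply,
          Matrix.mul_apply, Fin.sum_univ_two, Matrix.zero_apply, Matrix.one_apply,
          Matrix.of_apply, Matrix.cons_val_zero, Matrix.cons_val_one, Matrix.head_cons,
          Matrix.head_fin_const, Matrix.empty_val', Matrix.cons_val_fin_one, Matrix.cons_val',
          smul_eq_mul, mul_zero, zero_mul, add_zero, zero_add, mul_one, one_mul, F10, F01,
          if_true, if_false] <;>
        field_simp <;> ring
  · rintro ⟨e1, e2⟩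
    rw [← Matrix.ext_iff] at e1 e2
    simp only [Fin.forall_fin_two] at e1 e2
    simp only [Fin.zero_eta, Fin.mk_one, Matrix.add_apply, Matrix.smul_apply, Matrix.mul_apply, Fin.sum_univ_two,
      Matrix.zero_apply, Matrix.one_apply, Matrix.of_apply, Matrix.cons_val_zero,
      Matrix.cons_val_one, Matrix.head_cons, Matrix.head_fin_const, Matrix.empty_val',
      Matrix.cons_val_fin_one, Matrix.cons_val', smul_eq_mul, mul_zero, zero_mul, add_zero,
      zero_add, mul_one, one_mul, F10, F01, if_true, if_false] at e1 e2
    obtain ⟨⟨a1, a2⟩, a3, a4⟩ := e1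
    obtain ⟨⟨b1, b2⟩, b3, b4⟩ := e2
    have dk := detne g.2.1
    have dA := detne g.2.2
    rw [Matrix.det_fin_two] at dk dA
    have hk10 : (g.2.1 : M2 F) 1 0 = 0 := by
      by_contra hk
      have hA10 : (g.2.2 : M2 F) 1 0 = 0 := (mul_eq_zero.mp a3).resolve_right hk
      have hh10 : (g.1 : M2 F) 1 0 = 0 := by
        rw [← a4, hA10, zero_mul]
      have hA11 : (g.2.2 : M2 F) 1 1 = 0 := by
        rw [hh10] at b3
        exact (mul_eq_zero.mp b3).resolve_right hk
      apply dA
      rw [hA10, hA11]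
      ring
    rw [hk10, mul_zero, sub_zero] at dk
    have k00ne := left_ne_zero_of_mul dk
    have k11ne := right_ne_zero_of_mul dk
    have hA10 : (g.2.2 : M2 F) 1 0 = 0 := by
      have h0 : (g.2.2 : M2 F) 1 0 * (g.2.1 : M2 F) 0 0 = 0 := by
        linear_combination a1 - ((g.2.2 : M2 F) 0 0) * hk10
      exact (mul_eq_zero.mp h0).resolve_right k00ne
    have hh10 : (g.1 : M2 F) 1 0 = 0 := by
      linear_combination ((g.2.1 : M2 F) 1 1) * hA10 - a4
    rw [hA10, mul_zero, sub_zero] at dA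
    have A00ne := left_ne_zero_of_mul dA
    have A11ne := right_ne_zero_of_mul dA
    refine ⟨⟨⟨Units.mk0 _ A11ne, (g.2.2 : M2 F) 0 1⟩,
      ⟨Units.mk0 _ k00ne, Units.mk0 _ k11ne, (g.2.1 : M2 F) 0 1⟩⟩, ?_⟩
    refine Prod.ext (Units.ext ?_) (Prod.ext (Units.ext ?_) (Units.ext ?_))
    · refine Matrix.ext fun i j => ?_
      fin_cases i <;> fin_cases j <;>
        simp only [Fin.zero_eta, Fin.mk_one, f₅, GLmk_coe, Units.val_mk0, Matrix.of_apply, Matrix.cons_val_zero,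
          Matrix.cons_val_one, Matrix.head_cons, Matrix.head_fin_const, Matrix.cons_val',
          Matrix.empty_val', Matrix.cons_val_fin_one]
      · linear_combination b1 - ((g.2.2 : M2 F) 0 1) * hk10
      · exact b2
      · exact hh10.symm
      · exact b4
    · refine Matrix.ext fun i j => ?_
      fin_cases i <;> fin_cases j <;>
        simp only [Fin.zero_eta, Fin.mk_one, f₅, GLmk_coe, Units.val_mk0, Matrix.of_apply, Matrix.cons_val_zero,
          Matrix.cons_val_one, Matrix.head_cons, Matrix.head_fin_const, Matrix.cons_val',
          Matrix.empty_val', Matrix.cons_val_fin_one]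
      exact hk10.symm
    · refine Matrix.ext fun i j => ?_
      fin_cases i <;> fin_cases j <;>
        simp only [Fin.zero_eta, Fin.mk_one, f₅, GLmk_coe, Units.val_mk0, Matrix.of_apply, Matrix.cons_val_zero,
          Matrix.cons_val_one, Matrix.head_cons, Matrix.head_fin_const, Matrix.cons_val',
          Matrix.empty_val', Matrix.cons_val_fin_one]
      · field_simp
        linear_combination b1 - a2 - ((g.2.2 : M2 F) 0 1) * hk10 +
          ((g.2.1 : M2 F) 0 1) * hA10
      · exact hA10.symm

lemma f₅_inj : Function.Injective (f₅ (F := F)) := by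
  rintro ⟨⟨d, b⟩, ⟨k00, k11, k01⟩⟩ ⟨⟨d', b'⟩, ⟨k00', k11', k01'⟩⟩ h
  simp only [f₅, Prod.mk.injEq] at h
  obtain ⟨h1, h2, h3⟩ := h
  obtain ⟨n1, n2, -, n4⟩ := mat_entries (congrArg Units.val h2)
  obtain ⟨p1, p2, -, p4⟩ := mat_entries (congrArg Units.val h3)
  simp only [Prod.mk.injEq]
  exact ⟨⟨Units.ext p4, p2⟩, Units.ext n1, Units.ext n4, n2⟩

lemma card_stab₅ :
    Nat.card (stab ((!![0, 1; 0, 0] : M2 F), (1 : M2 F))) =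
      Nat.card ((Fˣ × F) × (Fˣ × Fˣ × F)) := by
  rw [← range_f₅]
  exact (Nat.card_congr (Equiv.ofInjective _ f₅_inj)).symm

end Aux

/-- over a finite field of odd cardinality `q`, the cardinalities of the
`G`-orbits of `x₁ = (0,E₁₂)`, `x₂ = (0,I₂)`, `x₃ = (E₁₁,E₁₂)`, `x₄ = (E₁₂,E₂₂)`,
`x₅ = (E₁₂,I₂)` and of the corresponding stabilizers in `G` are as listed. -/
theorem stmt13 (F : Type*) [Field F] [Fintype F] (q : ℕ)
    (hq : Fintype.card F = q) (hodd : Odd q) :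
    (Nat.card (orbit ((0 : M2 F), !![0, 1; 0, 0])) = (q + 1) ^ 3 * (q - 1) ∧
      Nat.card (orbit ((0 : M2 F), (1 : M2 F))) = q * (q ^ 2 - 1) ^ 2 ∧
      Nat.card (orbit ((!![1, 0; 0, 0] : M2 F), !![0, 1; 0, 0])) = q * (q ^ 2 - 1) ^ 2 ∧
      Nat.card (orbit ((!![0, 1; 0, 0] : M2 F), !![0, 0; 0, 1])) = q * (q ^ 2 - 1) ^ 2 ∧
      Nat.card (orbit ((!![0, 1; 0, 0] : M2 F), (1 : M2 F))) = q * (q ^ 2 - 1) ^ 3) ∧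
    (Nat.card (stab ((0 : M2 F), !![0, 1; 0, 0])) = q ^ 3 * (q - 1) ^ 5 ∧
      Nat.card (stab ((0 : M2 F), (1 : M2 F))) = q ^ 2 * (q - 1) ^ 3 * (q ^ 2 - 1) ∧
      Nat.card (stab ((!![1, 0; 0, 0] : M2 F), !![0, 1; 0, 0])) =
        q ^ 2 * (q - 1) ^ 3 * (q ^ 2 - 1) ∧
      Nat.card (stab ((!![0, 1; 0, 0] : M2 F), !![0, 0; 0, 1])) =
        q ^ 2 * (q - 1) ^ 3 * (q ^ 2 - 1) ∧
      Nat.card (stab ((!![0, 1; 0, 0] : M2 F), (1 : M2 F))) = q ^ 2 * (q - 1) ^ 3) := by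
  classical
  have h2q : 1 < q := hq ▸ Fintype.one_lt_card
  obtain ⟨r, rfl⟩ : ∃ r, q = r + 2 := ⟨q - 2, by omega⟩
  have e1 : (r + 2) ^ 2 - 1 = (r + 1) * (r + 3) := Nat.sub_eq_of_eq_add (by ring)
  have e2 : (r + 2) ^ 2 - (r + 2) = (r + 1) * (r + 2) := Nat.sub_eq_of_eq_add (by ring)
  have e3 : r + 2 - 1 = r + 1 := by omega
  have cardF : Nat.card F = r + 2 := by rw [Nat.card_eq_fintype_card, hq]
  have cardU : Nat.card Fˣ = r + 1 := by
    rw [Nat.card_eq_fintype_card, Fintype.card_units, hq]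
    omega
  have cardGL : Nat.card (GL (Fin 2) F) = (r + 1) * (r + 3) * ((r + 1) * (r + 2)) := by
    rw [Matrix.card_GL_field, Fin.prod_univ_two, hq]
    simp only [Fin.val_zero, Fin.val_one, pow_zero, pow_one, e1, e2]
  have cardG : Nat.card (GL (Fin 2) F × GL (Fin 2) F × GL (Fin 2) F) =
      ((r + 1) * (r + 3) * ((r + 1) * (r + 2))) ^ 3 := by
    rw [Nat.card_prod, Nat.card_prod, cardGL]; ring
  have s1 : Nat.card (stab ((0 : M2 F), !![0, 1; 0, 0])) = (r + 2) ^ 3 * (r + 1) ^ 5 := by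
    rw [card_stab₁]
    simp only [Nat.card_prod, cardU, cardF]
    ring
  have s2 : Nat.card (stab ((0 : M2 F), (1 : M2 F))) =
      (r + 2) ^ 2 * (r + 1) ^ 3 * ((r + 1) * (r + 3)) := by
    rw [card_stab₂]
    simp only [Nat.card_prod, cardU, cardF, cardGL]
    ring
  have s3 : Nat.card (stab ((!![1, 0; 0, 0] : M2 F), !![0, 1; 0, 0])) =
      (r + 2) ^ 2 * (r + 1) ^ 3 * ((r + 1) * (r + 3)) := by
    rw [card_stab₃]
    simp only [Nat.card_prod, cardU, cardF, cardGL]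
    ring
  have s4 : Nat.card (stab ((!![0, 1; 0, 0] : M2 F), !![0, 0; 0, 1])) =
      (r + 2) ^ 2 * (r + 1) ^ 3 * ((r + 1) * (r + 3)) := by
    rw [card_stab₄]
    simp only [Nat.card_prod, cardU, cardF, cardGL]
    ring
  have s5 : Nat.card (stab ((!![0, 1; 0, 0] : M2 F), (1 : M2 F))) =
      (r + 2) ^ 2 * (r + 1) ^ 3 := by
    rw [card_stab₅]
    simp only [Nat.card_prod, cardU, cardF]
    ring
  have o1 : Nat.card (orbit ((0 : M2 F), !![0, 1; 0, 0])) = (r + 3) ^ 3 * (r + 1) := by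
    have h := orbit_mul_stab ((0 : M2 F), !![0, 1; 0, 0])
    rw [s1, cardG] at h
    exact Nat.eq_of_mul_eq_mul_right (by positivity) (h.trans (by ring))
  have o2 : Nat.card (orbit ((0 : M2 F), (1 : M2 F))) =
      (r + 2) * ((r + 1) * (r + 3)) ^ 2 := by
    have h := orbit_mul_stab ((0 : M2 F), (1 : M2 F))
    rw [s2, cardG] at h
    exact Nat.eq_of_mul_eq_mul_right (by positivity) (h.trans (by ring))
  have o3 : Nat.card (orbit ((!![1, 0; 0, 0] : M2 F), !![0, 1; 0, 0])) =
      (r + 2) * ((r + 1) * (r + 3)) ^ 2 := by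
    have h := orbit_mul_stab ((!![1, 0; 0, 0] : M2 F), !![0, 1; 0, 0])
    rw [s3, cardG] at h
    exact Nat.eq_of_mul_eq_mul_right (by positivity) (h.trans (by ring))
  have o4 : Nat.card (orbit ((!![0, 1; 0, 0] : M2 F), !![0, 0; 0, 1])) =
      (r + 2) * ((r + 1) * (r + 3)) ^ 2 := by
    have h := orbit_mul_stab ((!![0, 1; 0, 0] : M2 F), !![0, 0; 0, 1])
    rw [s4, cardG] at h
    exact Nat.eq_of_mul_eq_mul_right (by positivity) (h.trans (by ring))
  have o5 : Nat.card (orbit ((!![0, 1; 0, 0] : M2 F), (1 : M2 F))) =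
      (r + 2) * ((r + 1) * (r + 3)) ^ 3 := by
    have h := orbit_mul_stab ((!![0, 1; 0, 0] : M2 F), (1 : M2 F))
    rw [s5, cardG] at h
    exact Nat.eq_of_mul_eq_mul_right (by positivity) (h.trans (by ring))
  refine ⟨⟨?_, ?_, ?_, ?_, ?_⟩, ?_, ?_, ?_, ?_, ?_⟩
  · rw [o1, e3]
  · rw [o2, e1]
  · rw [o3, e1]
  · rw [o4, e1]
  · rw [o5, e1]
  · rw [s1, e3]
  · rw [s2, e3, e1]
  · rw [s3, e3, e1]
  · rw [s4, e3, e1]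
  · rw [s5, e3]
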